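/- Let C, C₁, C₂ be finite sets of integers with sumset C₁ + C₂ = C, let n be an even positive integer, let x ∈ ℤ^n, and let c ∈ C^n satisfy c · x = 0. Define 𝓛 = {a ∈ ℤ^n : a_i ∈ C₁ for 1 ≤ i ≤ n/2 and a_i ∈ C₂ for n/2 < i ≤ n}, 𝓡 = {b ∈ ℤ^n : b_i ∈ C₂ for 1 ≤ i ≤ n/2 and b_i ∈ C₁ for n/2 < i ≤ n}, the set of solution pairs P = {(a,b) ∈ 𝓛 × 𝓡 : a + b = c}, and P_𝓡 = {b ∈ 𝓡 : ∃ a ∈ 𝓛, (a,b) ∈ P}. For every real ε > 0: if |{b · x : b ∈ P_𝓡}| ≤ |P| · 2^{−εn}, then there exist at least 2^{εn} distinct vectors c' ∈ C^n with c' · x = 0. -/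
import Mathlib


open Pointwise

/-- Mixing dichotomy via coefficient shifting: if the right components of the
solution pairs produce few distinct dot products with `x`, then `x` admits at
least 2^{εn} distinct solution vectors supported on C. -/
theorem stmt_2 (C C₁ C₂ : Finset ℤ) (hC : C₁ + C₂ = C)
    (n : ℕ) (hn : 0 < n) (hneven : Even n)
    (x c : Fin n → ℤ) (hc : ∀ i, c i ∈ C) (hcx : ∑ i, c i * x i = 0)
    (L R : Set (Fin n → ℤ))
    (hL : L = {a | ∀ i : Fin n, ((i : ℕ) < n / 2 → a i ∈ C₁) ∧
      (n / 2 ≤ (i : ℕ) → a i ∈ C₂)})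
    (hR : R = {b | ∀ i : Fin n, ((i : ℕ) < n / 2 → b i ∈ C₂) ∧
      (n / 2 ≤ (i : ℕ) → b i ∈ C₁)})
    (P : Set ((Fin n → ℤ) × (Fin n → ℤ)))
    (hP : P = {p | p.1 ∈ L ∧ p.2 ∈ R ∧ p.1 + p.2 = c})
    (PR : Set (Fin n → ℤ)) (hPR : PR = {b | ∃ a, (a, b) ∈ P})
    (ε : ℝ) (hε : 0 < ε)
    (hmix : (Set.ncard ((fun b => ∑ i, b i * x i) '' PR) : ℝ) ≤
        (Set.ncard P : ℝ) * 2 ^ (-(ε * n))) :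
    (2 : ℝ) ^ (ε * n) ≤
      (Set.ncard {c' : Fin n → ℤ | (∀ i, c' i ∈ C) ∧ ∑ i, c' i * x i = 0} : ℝ) := by
  classical
  set f : (Fin n → ℤ) → ℤ := fun b => ∑ i, b i * x i with hfdef
  set S : Set (Fin n → ℤ) := {c' : Fin n → ℤ | (∀ i, c' i ∈ C) ∧ ∑ i, c' i * x i = 0}
    with hSdef
  -- decompose c pointwise
  have hc' : ∀ i, c i ∈ C₁ + C₂ := by intro i; rw [hC]; exact hc i
  choose u hu v hv huv using fun i => Finset.mem_add.mp (hc' i)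
  set a₀ : Fin n → ℤ := fun i => if (i : ℕ) < n / 2 then u i else v i with ha₀
  set b₁ : Fin n → ℤ := fun i => if (i : ℕ) < n / 2 then v i else u i with hb₁
  have hpair : (a₀, b₁) ∈ P := by
    rw [hP]
    refine ⟨?_, ?_, ?_⟩
    · rw [hL]; intro i
      constructor <;> intro h <;> simp only [ha₀]
      · rw [if_pos h]; exact hu i
      · rw [if_neg (by omega)]; exact hv i
    · rw [hR]; intro i
      constructor <;> intro h <;> simp only [hb₁]
      · rw [if_pos h]; exact hv i
      · rw [if_neg (by omega)]; exact hu i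
    · funext i
      simp only [Pi.add_apply, ha₀, hb₁]
      by_cases h : (i : ℕ) < n / 2
      · rw [if_pos h, if_pos h]; exact huv i
      · rw [if_neg h, if_neg h, add_comm]; exact huv i
  have hb₁PR : b₁ ∈ PR := by rw [hPR]; exact ⟨a₀, hpair⟩
  -- PR is finite
  have hPRfin : PR.Finite := by
    apply Set.Finite.subset (Set.Finite.pi (fun _ : Fin n => (C₁ ∪ C₂).finite_toSet))
    intro b hb
    rw [hPR] at hb
    obtain ⟨a, hab⟩ := hb
    rw [hP] at hab
    have hbR := hab.2.1
    rw [hR] at hbR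
    intro i _
    rcases lt_or_ge (i : ℕ) (n / 2) with h | h
    · simp only [Finset.coe_union, Set.mem_union, Finset.mem_coe]
      exact Or.inr ((hbR i).1 h)
    · simp only [Finset.coe_union, Set.mem_union, Finset.mem_coe]
      exact Or.inl ((hbR i).2 h)
  -- P is the image of PR
  have hPeq : P = (fun b => (c - b, b)) '' PR := by
    ext p
    constructor
    · intro hp
      obtain ⟨p1, p2⟩ := p
      refine ⟨p2, by rw [hPR]; exact ⟨p1, hp⟩, ?_⟩
      rw [hP] at hp
      have : p1 = c - p2 := by
        have := hp.2.2
        funext i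
        have := congrFun this i
        simp only [Pi.add_apply] at this
        simp [Pi.sub_apply, ← this]
      rw [this]
    · rintro ⟨b, hb, rfl⟩
      rw [hPR] at hb
      obtain ⟨a, hab⟩ := hb
      have : a = c - b := by
        rw [hP] at hab
        have := hab.2.2
        funext i
        have := congrFun this i
        simp only [Pi.add_apply] at this
        simp [Pi.sub_apply, ← this]
      show (c - b, b) ∈ P
      rw [← this]
      exact hab
  -- c - b₀ is in L whenever b₀ ∈ PR
  have hLsub : ∀ b₀ ∈ PR, c - b₀ ∈ L := by
    intro b₀ hb₀
    rw [hPR] at hb₀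
    obtain ⟨a, hab⟩ := hb₀
    have : a = c - b₀ := by
      rw [hP] at hab
      have := hab.2.2
      funext i
      have := congrFun this i
      simp only [Pi.add_apply] at this
      simp [Pi.sub_apply, ← this]
    rw [hP] at hab
    rw [← this]
    exact hab.1
  have hRsub : ∀ b₀ ∈ PR, b₀ ∈ R := by
    intro b₀ hb₀
    rw [hPR] at hb₀
    obtain ⟨a, hab⟩ := hb₀
    rw [hP] at hab
    exact hab.2.1
  -- Finset versions
  set T : Finset (Fin n → ℤ) := hPRfin.toFinset with hTdef
  have hTcoe : (↑T : Set (Fin n → ℤ)) = PR := hPRfin.coe_toFinset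
  set I : Finset ℤ := T.image f with hIdef
  have hTne : T.Nonempty := ⟨b₁, hPRfin.mem_toFinset.mpr hb₁PR⟩
  have hIne : I.Nonempty := hTne.image f
  -- pigeonhole
  have hsum : T.card = ∑ t ∈ I, (T.filter (fun b => f b = t)).card :=
    Finset.card_eq_sum_card_fiberwise (fun b hb => Finset.mem_image_of_mem f hb)
  have key : ∃ t ∈ I, T.card ≤ I.card * (T.filter (fun b => f b = t)).card := by
    apply Finset.exists_le_of_sum_le hIne
    apply le_of_eq
    calc ∑ _t ∈ I, T.card = I.card * T.card := by
            rw [Finset.sum_const, smul_eq_mul]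
      _ = I.card * ∑ t ∈ I, (T.filter (fun b => f b = t)).card := by rw [← hsum]
      _ = ∑ t ∈ I, I.card * (T.filter (fun b => f b = t)).card := by
            rw [Finset.mul_sum]
  obtain ⟨t, htI, hkey⟩ := key
  obtain ⟨b₀, hb₀T, hfb₀⟩ := Finset.mem_image.mp htI
  have hb₀PR : b₀ ∈ PR := hPRfin.mem_toFinset.mp hb₀T
  set F : Finset (Fin n → ℤ) := T.filter (fun b => f b = t) with hFdef
  -- map F into S injectively
  have hinj : Function.Injective (fun b' => (c - b₀) + b') := add_right_injective _
  have hmaps : ∀ b' ∈ F, (c - b₀) + b' ∈ S := by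
    intro b' hb'
    have hb'T : b' ∈ T := (Finset.mem_filter.mp hb').1
    have hfb' : f b' = t := (Finset.mem_filter.mp hb').2
    have hb'PR : b' ∈ PR := hPRfin.mem_toFinset.mp hb'T
    have hL0 := hLsub b₀ hb₀PR
    rw [hL] at hL0
    have hR' := hRsub b' hb'PR
    rw [hR] at hR'
    constructor
    · intro i
      simp only [Pi.add_apply]
      rcases lt_or_ge (i : ℕ) (n / 2) with h | h
      · rw [← hC]; exact Finset.add_mem_add ((hL0 i).1 h) ((hR' i).1 h)
      · have hC' : C₂ + C₁ = C := by rw [add_comm]; exact hC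
        rw [← hC']
        exact Finset.add_mem_add ((hL0 i).2 h) ((hR' i).2 h)
    · have expand : ∑ i, ((c - b₀ + b') i) * x i =
          (∑ i, c i * x i) - (∑ i, b₀ i * x i) + (∑ i, b' i * x i) := by
        rw [← Finset.sum_sub_distrib, ← Finset.sum_add_distrib]
        congr 1; funext i; simp [Pi.add_apply, Pi.sub_apply]; ring
      show ∑ i, ((c - b₀ + b') i) * x i = 0
      rw [expand, hcx]
      have h1 : ∑ i, b₀ i * x i = t := hfb₀
      have h2 : ∑ i, b' i * x i = t := hfb'
      rw [h1, h2]; ring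
  -- S is finite
  have hSfin : S.Finite := by
    apply Set.Finite.subset (Set.Finite.pi (fun _ : Fin n => C.finite_toSet))
    intro s hs i _
    exact hs.1 i
  -- F.card ≤ S.ncard
  have hFS : F.card ≤ S.ncard := by
    have h1 : F.card = (F.image (fun b' => (c - b₀) + b')).card :=
      (Finset.card_image_of_injective F hinj).symm
    have h2 : (↑(F.image (fun b' => (c - b₀) + b')) : Set (Fin n → ℤ)) ⊆ S := by
      intro s hs
      simp only [Finset.coe_image, Set.mem_image, Finset.mem_coe] at hs
      obtain ⟨b', hb', rfl⟩ := hs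
      exact hmaps b' hb'
    calc F.card = (↑(F.image (fun b' => (c - b₀) + b')) : Set (Fin n → ℤ)).ncard := by
          rw [Set.ncard_coe_finset, ← h1]
      _ ≤ S.ncard := Set.ncard_le_ncard h2 hSfin
  -- translate cardinalities
  have hPRcard : PR.ncard = T.card := by rw [← hTcoe, Set.ncard_coe_finset]
  have hPcard : P.ncard = T.card := by
    rw [hPeq, Set.ncard_image_of_injective PR (fun a b h => congrArg Prod.snd h),
      hPRcard]
  have himgcard : ((fun b => ∑ i, b i * x i) '' PR).ncard = I.card := by
    have : (fun b => ∑ i, b i * x i) '' PR = ↑I := by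
      rw [hIdef, Finset.coe_image, hTcoe]
    rw [this, Set.ncard_coe_finset]
  rw [himgcard, hPcard] at hmix
  -- real arithmetic
  have h2pos : (0 : ℝ) < 2 ^ (ε * n) := Real.rpow_pos_of_pos (by norm_num) _
  have hIpos : (0 : ℝ) < I.card := by
    exact_mod_cast Finset.card_pos.mpr hIne
  have hIT : (I.card : ℝ) * 2 ^ (ε * n) ≤ T.card := by
    rw [Real.rpow_neg (by norm_num : (0:ℝ) ≤ 2)] at hmix
    have := mul_le_mul_of_nonneg_right hmix (le_of_lt h2pos)
    rwa [mul_assoc, inv_mul_cancel₀ h2pos.ne', mul_one] at this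
  have hkeyR : (T.card : ℝ) ≤ I.card * F.card := by exact_mod_cast hkey
  have hfinal : (2 : ℝ) ^ (ε * n) ≤ F.card := by
    have := le_trans hIT hkeyR
    exact le_of_mul_le_mul_left this hIpos
  calc (2 : ℝ) ^ (ε * n) ≤ F.card := hfinal
    _ ≤ S.ncard := by exact_mod_cast hFS
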